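/- For every n ≥ 1, the h-polynomial of the associahedron (the Narayana polynomial) satisfies Σ_{w ∈ S_n(312)} t^{des(w)} = Σ_{w ∈ Pk_n(312)} t^{des(w)} (1+t)^{n−1−2·des(w)} as polynomials in t. Consequently the γ-vector of the simplicial complex dual to the associahedron is given by γ_i = #{w ∈ Pk_n(312) : des(w) = i}, and it is the f-vector of a flag simplicial complex (namely the complex of sets of pairwise noncrossing pairs (a,b) with 1 ≤ a < b ≤ n−1); in particular it satisfies the Kruskal–Katona inequalities. -/

import Mathlib

open Polynomial Finset

attribute [local instance] Classical.propDecidable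

/-- The value `w_i` of the permutation word `w = w_1 ⋯ w_n` of `[n] = {1,…,n}`
(one-indexed); by convention the value is `0` outside the range, so `w_0 = 0`. -/
def pval (n : ℕ) (w : Equiv.Perm (Fin n)) (i : ℕ) : ℕ :=
  if h : 1 ≤ i ∧ i ≤ n then ((w ⟨i - 1, by omega⟩ : Fin n) : ℕ) + 1 else 0

/-- The descent set of `w`: positions `i ∈ [n-1]` with `w_i > w_{i+1}`. -/
def desSet (n : ℕ) (w : Equiv.Perm (Fin n)) : Finset ℕ :=
  (Finset.Icc 1 (n - 1)).filter fun i => pval n w (i + 1) < pval n w i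

/-- The number of descents of `w`. -/
def des (n : ℕ) (w : Equiv.Perm (Fin n)) : ℕ := (desSet n w).card

/-- `w ∈ Pk_n`: `w` has no double descents and no final descent. -/
def IsPk (n : ℕ) (w : Equiv.Perm (Fin n)) : Prop :=
  (∀ i ∈ Finset.Icc 2 (n - 1),
      ¬(pval n w i < pval n w (i - 1) ∧ pval n w (i + 1) < pval n w i)) ∧
  ¬(pval n w n < pval n w (n - 1))

/-- `w` is 312-avoiding: there are no positions `i < j < k` with `w_j < w_k < w_i`. -/
def Avoids312 (n : ℕ) (w : Equiv.Perm (Fin n)) : Prop :=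
  ∀ i ∈ Finset.Icc 1 n, ∀ j ∈ Finset.Icc 1 n, ∀ k ∈ Finset.Icc 1 n,
    i < j → j < k → ¬(pval n w j < pval n w k ∧ pval n w k < pval n w i)

/-- Two pairs `(a,b)` and `(c,d)` with `a < b`, `c < d` are noncrossing:
`a,b,c,d` are pairwise distinct and neither `a < c < b < d` nor `c < a < d < b`. -/
def Noncrossing (p q : ℕ × ℕ) : Prop :=
  p.1 ≠ q.1 ∧ p.1 ≠ q.2 ∧ p.2 ≠ q.1 ∧ p.2 ≠ q.2 ∧
  ¬(p.1 < q.1 ∧ q.1 < p.2 ∧ p.2 < q.2) ∧ ¬(q.1 < p.1 ∧ p.1 < q.2 ∧ q.2 < p.2)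


/-! ### list-level statistics -/

def wv (l : List ℕ) (i : ℕ) : ℕ := if i = 0 then 0 else (l[i-1]?).getD 0

def lDesSet (l : List ℕ) : Finset ℕ :=
  (Finset.Icc 1 (l.length - 1)).filter fun i => wv l (i+1) < wv l i

def lDes (l : List ℕ) : ℕ := (lDesSet l).card

def lPk (l : List ℕ) : Prop :=
  (∀ i ∈ Finset.Icc 2 (l.length - 1),
    ¬(wv l i < wv l (i-1) ∧ wv l (i+1) < wv l i)) ∧
  ¬(wv l l.length < wv l (l.length - 1))

def lAv (l : List ℕ) : Prop :=
  ∀ i ∈ Finset.Icc 1 l.length, ∀ j ∈ Finset.Icc 1 l.length, ∀ k ∈ Finset.Icc 1 l.length,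
    i < j → j < k → ¬(wv l j < wv l k ∧ wv l k < wv l i)

/-! ### the word of a permutation -/

def word (n : ℕ) (w : Equiv.Perm (Fin n)) : List ℕ :=
  List.ofFn (fun i : Fin n => (w i : ℕ) + 1)

lemma word_length (n : ℕ) (w : Equiv.Perm (Fin n)) : (word n w).length = n := by
  simp [word]

lemma pval_eq_wv (n : ℕ) (w : Equiv.Perm (Fin n)) (i : ℕ) :
    pval n w i = wv (word n w) i := by
  unfold pval wv
  rcases Nat.eq_zero_or_pos i with h | h
  · subst h; simp
  by_cases h2 : i ≤ n
  · rw [dif_pos ⟨h, h2⟩, if_neg (by omega)]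
    rw [List.getElem?_eq_getElem (by rw [word_length]; omega)]
    simp only [Option.getD_some, word, List.getElem_ofFn]
  · rw [dif_neg (by omega), if_neg (by omega)]
    rw [List.getElem?_eq_none (by rw [word_length]; omega)]
    rfl

lemma des_eq (n : ℕ) (w : Equiv.Perm (Fin n)) : des n w = lDes (word n w) := by
  unfold des desSet lDes lDesSet
  rw [word_length]
  congr 1
  apply Finset.filter_congr
  intro i _
  simp [pval_eq_wv]

lemma isPk_iff (n : ℕ) (w : Equiv.Perm (Fin n)) : IsPk n w ↔ lPk (word n w) := by
  unfold IsPk lPk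
  rw [word_length]
  simp only [pval_eq_wv]

lemma avoids_iff (n : ℕ) (w : Equiv.Perm (Fin n)) : Avoids312 n w ↔ lAv (word n w) := by
  unfold Avoids312 lAv
  rw [word_length]
  simp only [pval_eq_wv]

/-! ### the finset of words -/

def baseWord (n : ℕ) : List ℕ := (List.range n).map (·+1)

lemma list_toFinset_map (l : List ℕ) (f : ℕ → ℕ) :
    (l.map f).toFinset = l.toFinset.image f := by
  induction l with
  | nil => simp
  | cons a t ih => simp [ih]

lemma baseWord_nodup (n : ℕ) : (baseWord n).Nodup :=
  (List.nodup_range : (List.range n).Nodup).map (fun a b h => by omega)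

lemma baseWord_toFinset (n : ℕ) : (baseWord n).toFinset = Finset.Icc 1 n := by
  ext x
  simp only [baseWord, List.mem_toFinset, List.mem_map, List.mem_range, Finset.mem_Icc]
  constructor
  · rintro ⟨a, ha, rfl⟩; omega
  · rintro ⟨h1, h2⟩; exact ⟨x - 1, by omega, by omega⟩

def Wfull (n : ℕ) : Finset (List ℕ) := (baseWord n).permutations.toFinset

lemma mem_Wfull {n : ℕ} {l : List ℕ} :
    l ∈ Wfull n ↔ l.Nodup ∧ l.toFinset = Finset.Icc 1 n := by
  unfold Wfull
  rw [List.mem_toFinset, List.mem_permutations]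
  constructor
  · intro h
    refine ⟨h.nodup_iff.mpr (baseWord_nodup n), ?_⟩
    rw [← baseWord_toFinset]
    ext x
    simp only [List.mem_toFinset]
    exact h.mem_iff
  · rintro ⟨h1, h2⟩
    exact List.perm_of_nodup_nodup_toFinset_eq h1 (baseWord_nodup n)
      (by rw [h2, baseWord_toFinset])

lemma word_mem_Wfull (n : ℕ) (w : Equiv.Perm (Fin n)) : word n w ∈ Wfull n := by
  rw [mem_Wfull]
  constructor
  · rw [word, List.nodup_ofFn]
    intro i j h
    simp only [add_left_inj] at h
    exact w.injective (Fin.val_injective h)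
  · ext x
    simp only [word, List.mem_toFinset, List.mem_ofFn, Set.mem_range, Finset.mem_Icc]
    constructor
    · rintro ⟨i, rfl⟩; have := (w i).isLt; omega
    · rintro ⟨h1, h2⟩
      refine ⟨w.symm ⟨x - 1, by omega⟩, ?_⟩
      rw [Equiv.apply_symm_apply]
      simp only [Fin.val_mk]
      omega

lemma mem_of_mem_Wfull {n : ℕ} {l : List ℕ} (hl : l ∈ Wfull n) {x : ℕ} (hx : x ∈ l) :
    1 ≤ x ∧ x ≤ n := by
  rw [mem_Wfull] at hl
  have : x ∈ l.toFinset := List.mem_toFinset.mpr hx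
  rw [hl.2, Finset.mem_Icc] at this
  exact this

lemma length_of_mem_Wfull {n : ℕ} {l : List ℕ} (hl : l ∈ Wfull n) : l.length = n := by
  rw [mem_Wfull] at hl
  have := List.toFinset_card_of_nodup hl.1
  rw [hl.2] at this
  simpa using this.symm

lemma exists_word {n : ℕ} {l : List ℕ} (hl : l ∈ Wfull n) :
    ∃ w : Equiv.Perm (Fin n), word n w = l := by
  have hnd := (mem_Wfull.mp hl).1
  have hlen : l.length = n := length_of_mem_Wfull hl
  have hmem : ∀ (i : ℕ) (h : i < l.length), 1 ≤ l[i] ∧ l[i] ≤ n := fun i h =>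
    mem_of_mem_Wfull hl (l.getElem_mem h)
  have hinj : Function.Injective (fun i : Fin n =>
      (⟨l[(i:ℕ)]'(lt_of_lt_of_eq i.isLt hlen.symm) - 1, by
        have := hmem i (lt_of_lt_of_eq i.isLt hlen.symm); omega⟩ : Fin n)) := by
    intro i j h
    simp only [Fin.mk.injEq] at h
    have hi := hmem i (lt_of_lt_of_eq i.isLt hlen.symm)
    have hj := hmem j (lt_of_lt_of_eq j.isLt hlen.symm)
    have heq : l[(i:ℕ)]'(lt_of_lt_of_eq i.isLt hlen.symm)
        = l[(j:ℕ)]'(lt_of_lt_of_eq j.isLt hlen.symm) := by omega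
    exact Fin.val_injective ((List.Nodup.getElem_inj_iff hnd).mp heq)
  refine ⟨Equiv.ofBijective _ (Finite.injective_iff_bijective.mp hinj), ?_⟩
  apply List.ext_getElem (by rw [word_length, hlen])
  intro i h1 h2
  simp only [word, List.getElem_ofFn, Equiv.ofBijective_apply]
  have := hmem i h2
  omega

lemma word_injective (n : ℕ) : Function.Injective (word n) := by
  intro w w' h
  apply Equiv.ext
  intro i
  have h2 : (word n w)[(i:ℕ)]'(by rw [word_length]; exact i.isLt)
      = (word n w')[(i:ℕ)]'(by rw [word_length]; exact i.isLt) := by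
    congr 1
  simp only [word, List.getElem_ofFn, Fin.eta] at h2
  exact Fin.val_injective (by omega)

lemma image_word (n : ℕ) : Finset.univ.image (word n) = Wfull n := by
  apply Finset.Subset.antisymm
  · intro l hl
    obtain ⟨w, _, rfl⟩ := Finset.mem_image.mp hl
    exact word_mem_Wfull n w
  · intro l hl
    obtain ⟨w, hw⟩ := exists_word hl
    exact Finset.mem_image.mpr ⟨w, Finset.mem_univ _, hw⟩

lemma perm_sum {M : Type} [AddCommMonoid M] (n : ℕ) (F : List ℕ → M) :
    ∑ w : Equiv.Perm (Fin n), F (word n w) = ∑ l ∈ Wfull n, F l := by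
  rw [← image_word, Finset.sum_image (fun a _ b _ h => word_injective n h)]
/-! ### gluing words -/

def Wg (u v : List ℕ) : List ℕ := u.map (·+1) ++ 1 :: v.map (· + (u.length+1))

lemma lenWg (u v : List ℕ) : (Wg u v).length = u.length + v.length + 1 := by
  simp [Wg]; omega

lemma wv_zero (l : List ℕ) : wv l 0 = 0 := rfl

lemma wv_hi {l : List ℕ} {i : ℕ} (h : l.length < i) : wv l i = 0 := by
  unfold wv
  rw [if_neg (by omega), List.getElem?_eq_none (by omega)]
  rfl

lemma wv_mem {l : List ℕ} {i : ℕ} (h1 : 1 ≤ i) (h2 : i ≤ l.length) : wv l i ∈ l := by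
  unfold wv
  rw [if_neg (by omega), List.getElem?_eq_getElem (by omega)]
  exact l.getElem_mem _

lemma wv_Wg_left {u v : List ℕ} {i : ℕ} (h1 : 1 ≤ i) (h2 : i ≤ u.length) :
    wv (Wg u v) i = wv u i + 1 := by
  unfold wv Wg
  rw [if_neg (by omega), if_neg (by omega)]
  rw [List.getElem?_append, if_pos (by simp; omega), List.getElem?_map,
    List.getElem?_eq_getElem (by omega : i - 1 < u.length)]
  simp

lemma wv_Wg_mid (u v : List ℕ) : wv (Wg u v) (u.length + 1) = 1 := by
  unfold wv Wg
  rw [if_neg (by omega)]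
  rw [List.getElem?_append_right (by simp)]
  simp

lemma wv_Wg_right {u v : List ℕ} {i : ℕ} (h1 : u.length + 2 ≤ i)
    (h2 : i ≤ u.length + v.length + 1) :
    wv (Wg u v) i = wv v (i - u.length - 1) + (u.length + 1) := by
  unfold wv Wg
  rw [if_neg (by omega), if_neg (by omega)]
  rw [List.getElem?_append_right (by simp; omega)]
  have hj : i - 1 - (u.map (·+1)).length = (i - u.length - 2) + 1 := by simp; omega
  have hj2 : i - u.length - 1 - 1 = i - u.length - 2 := by omega
  rw [hj, hj2, List.getElem?_cons_succ, List.getElem?_map,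
    List.getElem?_eq_getElem (by omega : i - u.length - 2 < v.length)]
  simp

lemma wv_bounds {u : List ℕ} (hu : ∀ x ∈ u, 1 ≤ x ∧ x ≤ u.length) {i : ℕ}
    (h1 : 1 ≤ i) (h2 : i ≤ u.length) : 1 ≤ wv u i ∧ wv u i ≤ u.length :=
  hu _ (wv_mem h1 h2)

section Slemmas

variable {u v : List ℕ}

lemma S3 (hu : ∀ x ∈ u, 1 ≤ x ∧ x ≤ u.length) (hv : ∀ x ∈ v, 1 ≤ x ∧ x ≤ v.length) :
    lAv (Wg u v) ↔ lAv u ∧ lAv v := by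
  have hn : (Wg u v).length = u.length + v.length + 1 := lenWg u v
  constructor
  · intro h
    constructor
    · intro i hi j hj k hk hij hjk
      simp only [Finset.mem_Icc] at hi hj hk
      have h' := h i (by rw [hn]; simp only [Finset.mem_Icc]; omega)
        j (by rw [hn]; simp only [Finset.mem_Icc]; omega)
        k (by rw [hn]; simp only [Finset.mem_Icc]; omega) hij hjk
      rw [wv_Wg_left (by omega) (by omega), wv_Wg_left (by omega) (by omega),
        wv_Wg_left (by omega) (by omega)] at h'
      rintro ⟨c1, c2⟩
      exact h' ⟨by omega, by omega⟩
    · intro i hi j hj k hk hij hjk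
      simp only [Finset.mem_Icc] at hi hj hk
      have h' := h (i+u.length+1) (by rw [hn]; simp only [Finset.mem_Icc]; omega)
        (j+u.length+1) (by rw [hn]; simp only [Finset.mem_Icc]; omega)
        (k+u.length+1) (by rw [hn]; simp only [Finset.mem_Icc]; omega) (by omega) (by omega)
      rw [wv_Wg_right (by omega) (by omega), wv_Wg_right (by omega) (by omega),
        wv_Wg_right (by omega) (by omega)] at h'
      have e1 : i + u.length + 1 - u.length - 1 = i := by omega
      have e2 : j + u.length + 1 - u.length - 1 = j := by omega
      have e3 : k + u.length + 1 - u.length - 1 = k := by omega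
      rw [e1, e2, e3] at h'
      rintro ⟨c1, c2⟩
      exact h' ⟨by omega, by omega⟩
  · rintro ⟨hu', hv'⟩ i hi j hj k hk hij hjk ⟨c1, c2⟩
    rw [hn] at hi hj hk
    simp only [Finset.mem_Icc] at hi hj hk
    rcases lt_trichotomy k (u.length+1) with hk' | hk' | hk'
    · have bi := wv_Wg_left (u := u) (v := v) (by omega : 1 ≤ i) (by omega : i ≤ u.length)
      have bj := wv_Wg_left (u := u) (v := v) (by omega : 1 ≤ j) (by omega : j ≤ u.length)
      have bk := wv_Wg_left (u := u) (v := v) (by omega : 1 ≤ k) (by omega : k ≤ u.length)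
      rw [bj, bk] at c1
      rw [bk, bi] at c2
      exact hu' i (by simp only [Finset.mem_Icc]; omega) j (by simp only [Finset.mem_Icc]; omega)
        k (by simp only [Finset.mem_Icc]; omega) hij hjk ⟨by omega, by omega⟩
    · have bk : wv (Wg u v) k = 1 := by rw [hk']; exact wv_Wg_mid u v
      have bj := wv_Wg_left (u := u) (v := v) (by omega : 1 ≤ j) (by omega : j ≤ u.length)
      rw [bk, bj] at c1
      omega
    · have bk := wv_Wg_right (u := u) (v := v) (by omega : u.length + 2 ≤ k) (by omega)
      have bk2 := wv_bounds hv (i := k - u.length - 1) (by omega) (by omega)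
      have hi2 : u.length + 2 ≤ i := by
        by_contra hcon
        rcases lt_trichotomy i (u.length+1) with hi' | hi' | hi'
        · have bi := wv_Wg_left (u := u) (v := v) (by omega : 1 ≤ i) (by omega : i ≤ u.length)
          have bi2 := wv_bounds hu (i := i) (by omega) (by omega)
          rw [bk, bi] at c2; omega
        · have bi : wv (Wg u v) i = 1 := by rw [hi']; exact wv_Wg_mid u v
          rw [bk, bi] at c2; omega
        · omega
      have bi := wv_Wg_right (u := u) (v := v) (by omega : u.length + 2 ≤ i) (by omega)
      have bj := wv_Wg_right (u := u) (v := v) (by omega : u.length + 2 ≤ j) (by omega)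
      rw [bj, bk] at c1
      rw [bk, bi] at c2
      exact hv' (i-u.length-1) (by simp only [Finset.mem_Icc]; omega)
        (j-u.length-1) (by simp only [Finset.mem_Icc]; omega)
        (k-u.length-1) (by simp only [Finset.mem_Icc]; omega) (by omega) (by omega)
        ⟨by omega, by omega⟩

lemma S1set (hu : ∀ x ∈ u, 1 ≤ x ∧ x ≤ u.length) (hv : ∀ x ∈ v, 1 ≤ x ∧ x ≤ v.length) :
    lDesSet (Wg u v) = (lDesSet u ∪ (if u.length = 0 then ∅ else {u.length})) ∪
      (lDesSet v).image (· + (u.length+1)) := by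
  have hn : (Wg u v).length = u.length + v.length + 1 := lenWg u v
  ext i
  simp only [lDesSet, Finset.mem_union, Finset.mem_filter, Finset.mem_Icc, Finset.mem_image, hn]
  constructor
  · rintro ⟨⟨hi1, hi2⟩, hdes⟩
    rcases lt_trichotomy i u.length with hip | hip | hip
    · rw [wv_Wg_left (by omega) (by omega), wv_Wg_left (by omega) (by omega)] at hdes
      exact Or.inl (Or.inl ⟨⟨by omega, by omega⟩, by omega⟩)
    · subst hip
      refine Or.inl (Or.inr ?_)
      rw [if_neg (by omega)]
      simp
    · rcases Nat.eq_or_lt_of_le hip with hip2 | hip2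
      · exfalso
        have b1 : wv (Wg u v) i = 1 := by rw [← hip2]; exact wv_Wg_mid u v
        have b2 := wv_Wg_right (u := u) (v := v) (i := i+1) (by omega) (by omega)
        rw [b1, b2] at hdes
        omega
      · rw [wv_Wg_right (by omega) (by omega), wv_Wg_right (by omega) (by omega)] at hdes
        refine Or.inr ⟨i - u.length - 1, ⟨⟨by omega, by omega⟩, ?_⟩, by omega⟩
        have e : i + 1 - u.length - 1 = (i - u.length - 1) + 1 := by omega
        rw [e] at hdes
        omega
  · rintro ((⟨⟨hi1, hi2⟩, hdes⟩ | hmem) | ⟨j, ⟨⟨hj1, hj2⟩, hdes⟩, rfl⟩)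
    · refine ⟨⟨by omega, by omega⟩, ?_⟩
      rw [wv_Wg_left (by omega) (by omega), wv_Wg_left (by omega) (by omega)]
      omega
    · by_cases hp0 : u.length = 0
      · rw [if_pos hp0] at hmem; simp at hmem
      · rw [if_neg hp0] at hmem
        simp only [Finset.mem_singleton] at hmem
        subst hmem
        refine ⟨⟨by omega, by omega⟩, ?_⟩
        have b1 := wv_Wg_mid u v
        have b2 := wv_Wg_left (u := u) (v := v) (i := u.length) (by omega) (le_refl _)
        have b3 := wv_bounds hu (i := u.length) (by omega) (le_refl _)
        rw [b1, b2]
        omega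
    · refine ⟨⟨by omega, by omega⟩, ?_⟩
      rw [wv_Wg_right (by omega) (by omega), wv_Wg_right (by omega) (by omega)]
      have e1 : j + (u.length+1) - u.length - 1 = j := by omega
      have e2 : j + (u.length+1) + 1 - u.length - 1 = j + 1 := by omega
      rw [e1, e2]
      omega

lemma lDesSet_subset (l : List ℕ) : lDesSet l ⊆ Finset.Icc 1 (l.length - 1) :=
  Finset.filter_subset _ _

lemma S1 (hu : ∀ x ∈ u, 1 ≤ x ∧ x ≤ u.length) (hv : ∀ x ∈ v, 1 ≤ x ∧ x ≤ v.length) :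
    lDes (Wg u v) = lDes u + lDes v + (if u.length = 0 then 0 else 1) := by
  unfold lDes
  rw [S1set hu hv]
  have hsub_u : ∀ x ∈ lDesSet u, 1 ≤ x ∧ x ≤ u.length - 1 := fun x hx => by
    have := lDesSet_subset u hx; simp only [Finset.mem_Icc] at this; exact this
  have hsub_v : ∀ x ∈ lDesSet v, 1 ≤ x ∧ x ≤ v.length - 1 := fun x hx => by
    have := lDesSet_subset v hx; simp only [Finset.mem_Icc] at this; exact this
  have hd1 : Disjoint (lDesSet u) (if u.length = 0 then (∅ : Finset ℕ) else {u.length}) := by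
    rw [Finset.disjoint_right]
    intro x hx hx'
    by_cases hp0 : u.length = 0
    · rw [if_pos hp0] at hx; simp at hx
    · rw [if_neg hp0] at hx
      simp only [Finset.mem_singleton] at hx
      subst hx
      have := hsub_u _ hx'
      omega
  have hd2 : Disjoint (lDesSet u ∪ (if u.length = 0 then (∅ : Finset ℕ) else {u.length}))
      ((lDesSet v).image (· + (u.length+1))) := by
    rw [Finset.disjoint_right]
    intro x hx hx'
    simp only [Finset.mem_image] at hx
    obtain ⟨j, hj, rfl⟩ := hx
    have hj' := hsub_v _ hj
    rcases Finset.mem_union.mp hx' with h | h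
    · have := hsub_u _ h; omega
    · by_cases hp0 : u.length = 0
      · rw [if_pos hp0] at h; simp at h
      · rw [if_neg hp0] at h
        simp only [Finset.mem_singleton] at h
        omega
  rw [Finset.card_union_of_disjoint hd2, Finset.card_union_of_disjoint hd1,
    Finset.card_image_of_injective _ (add_left_injective (u.length+1))]
  by_cases hp0 : u.length = 0
  · rw [if_pos hp0, if_pos hp0]
    simp
  · rw [if_neg hp0, if_neg hp0]
    simp only [Finset.card_singleton]
    omega

lemma S2 (hu : ∀ x ∈ u, 1 ≤ x ∧ x ≤ u.length) (hv : ∀ x ∈ v, 1 ≤ x ∧ x ≤ v.length) :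
    lPk (Wg u v) ↔ lPk u ∧ lPk v ∧ (u.length = 0 ∨ 1 ≤ v.length) := by
  have hn : (Wg u v).length = u.length + v.length + 1 := lenWg u v
  unfold lPk
  rw [hn]
  constructor
  · rintro ⟨hA, hB⟩
    have hc : u.length = 0 ∨ 1 ≤ v.length := by
      by_contra hcon
      push_neg at hcon
      obtain ⟨hp1, hq0⟩ := hcon
      have hq0' : v.length = 0 := by omega
      have b1 : wv (Wg u v) (u.length+v.length+1) = 1 := by
        rw [hq0']; simpa using wv_Wg_mid u v
      have b2 : wv (Wg u v) (u.length+v.length+1-1) = wv u u.length + 1 := by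
        have e : u.length + v.length + 1 - 1 = u.length := by omega
        rw [e]; exact wv_Wg_left (by omega) (le_refl _)
      have b3 := wv_bounds hu (i := u.length) (by omega) (le_refl _)
      exact hB (by rw [b1, b2]; omega)
    refine ⟨⟨?_, ?_⟩, ⟨?_, ?_⟩, hc⟩
    · intro i hi
      simp only [Finset.mem_Icc] at hi
      have h' := hA i (by simp only [Finset.mem_Icc]; omega)
      rw [wv_Wg_left (by omega) (by omega), wv_Wg_left (by omega) (by omega),
        wv_Wg_left (by omega) (by omega)] at h'
      rintro ⟨c1, c2⟩
      exact h' ⟨by omega, by omega⟩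
    · rcases Nat.lt_or_ge u.length 2 with hp2 | hp2
      · intro c
        rcases Nat.eq_zero_or_pos u.length with h0 | h1
        · rw [h0] at c; simp [wv_zero] at c
        · have h1' : u.length - 1 = 0 := by omega
          rw [h1', wv_zero] at c
          omega
      · have h' := hA u.length (by simp only [Finset.mem_Icc]; omega)
        have b1 := wv_Wg_left (u := u) (v := v) (i := u.length) (by omega) (le_refl _)
        have b2 := wv_Wg_left (u := u) (v := v) (i := u.length - 1) (by omega) (by omega)
        have b3 : wv (Wg u v) (u.length+1) = 1 := wv_Wg_mid u v
        have b4 := wv_bounds hu (i := u.length) (by omega) (le_refl _)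
        rw [b1, b2, b3] at h'
        intro c
        exact h' ⟨by omega, by omega⟩
    · intro i hi
      simp only [Finset.mem_Icc] at hi
      have h' := hA (i+u.length+1) (by simp only [Finset.mem_Icc]; omega)
      have e0 : i + u.length + 1 - 1 = i + u.length := by omega
      have e0' : i + u.length + 1 + 1 = i + u.length + 2 := by omega
      rw [e0, e0'] at h'
      have b1 := wv_Wg_right (u := u) (v := v) (i := i+u.length+1) (by omega) (by omega)
      have b2 := wv_Wg_right (u := u) (v := v) (i := i+u.length) (by omega) (by omega)
      have b3 := wv_Wg_right (u := u) (v := v) (i := i+u.length+2) (by omega) (by omega)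
      rw [b1, b2, b3] at h'
      have e1 : i + u.length + 1 - u.length - 1 = i := by omega
      have e2 : i + u.length - u.length - 1 = i - 1 := by omega
      have e3 : i + u.length + 2 - u.length - 1 = i + 1 := by omega
      rw [e1, e2, e3] at h'
      rintro ⟨c1, c2⟩
      exact h' ⟨by omega, by omega⟩
    · rcases Nat.lt_or_ge v.length 2 with hq2 | hq2
      · intro c
        rcases Nat.eq_zero_or_pos v.length with h0 | h1
        · rw [h0] at c; simp [wv_zero] at c
        · have h1' : v.length - 1 = 0 := by omega
          rw [h1', wv_zero] at c
          omega
      · have b1 := wv_Wg_right (u := u) (v := v) (i := u.length+v.length+1) (by omega) (by omega)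
        have b2 := wv_Wg_right (u := u) (v := v) (i := u.length+v.length) (by omega) (by omega)
        have e0 : u.length + v.length + 1 - 1 = u.length + v.length := by omega
        rw [e0, b1, b2] at hB
        have e1 : u.length + v.length + 1 - u.length - 1 = v.length := by omega
        have e2 : u.length + v.length - u.length - 1 = v.length - 1 := by omega
        rw [e1, e2] at hB
        intro c
        exact hB (by omega)
  · rintro ⟨⟨hu1, hu2⟩, ⟨hv1, hv2⟩, hc⟩
    constructor
    · intro i hi
      simp only [Finset.mem_Icc] at hi
      rcases lt_trichotomy i u.length with hip | hip | hip
      · have h' := hu1 i (by simp only [Finset.mem_Icc]; omega)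
        rw [wv_Wg_left (by omega) (by omega), wv_Wg_left (by omega) (by omega),
          wv_Wg_left (by omega) (by omega)]
        rintro ⟨c1, c2⟩
        exact h' ⟨by omega, by omega⟩
      · have b1 := wv_Wg_left (u := u) (v := v) (i := u.length) (by omega) (le_refl _)
        have b2 := wv_Wg_left (u := u) (v := v) (i := u.length-1) (by omega) (by omega)
        rw [hip, b1, b2, wv_Wg_mid]
        rintro ⟨c1, c2⟩
        exact hu2 (by omega)
      · rcases Nat.eq_or_lt_of_le hip with hip2 | hip2
        · have b3 := wv_Wg_right (u := u) (v := v) (i := i+1) (by omega) (by omega)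
          rintro ⟨c1, c2⟩
          have b1 : wv (Wg u v) i = 1 := by rw [← hip2]; exact wv_Wg_mid u v
          rw [b1, b3] at c2
          omega
        · rcases Nat.eq_or_lt_of_le hip2 with hip3 | hip3
          · rintro ⟨c1, c2⟩
            have b1 : wv (Wg u v) (i-1) = 1 := by
              have e : i - 1 = u.length + 1 := by omega
              rw [e]; exact wv_Wg_mid u v
            have b2 := wv_Wg_right (u := u) (v := v) (i := i) (by omega) (by omega)
            rw [b1, b2] at c1
            omega
          · have h' := hv1 (i-u.length-1) (by simp only [Finset.mem_Icc]; omega)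
            have b1 := wv_Wg_right (u := u) (v := v) (i := i) (by omega) (by omega)
            have b2 := wv_Wg_right (u := u) (v := v) (i := i-1) (by omega) (by omega)
            have b3 := wv_Wg_right (u := u) (v := v) (i := i+1) (by omega) (by omega)
            rw [b1, b2, b3]
            have e2 : i - 1 - u.length - 1 = i - u.length - 1 - 1 := by omega
            have e3 : i + 1 - u.length - 1 = i - u.length - 1 + 1 := by omega
            rw [e2, e3]
            rintro ⟨c1, c2⟩
            exact h' ⟨by omega, by omega⟩
    · rcases Nat.eq_zero_or_pos v.length with hq0 | hq1
      · have hp0 : u.length = 0 := by omega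
        intro c
        rw [hq0] at c
        have b1 : wv (Wg u v) (u.length+0+1) = 1 := by simpa using wv_Wg_mid u v
        have e : u.length + 0 + 1 - 1 = u.length := by omega
        rw [b1, e, hp0, wv_zero] at c
        omega
      · rcases Nat.lt_or_ge v.length 2 with hq2 | hq2
        · have hq1' : v.length = 1 := by omega
          have b1 := wv_Wg_right (u := u) (v := v) (i := u.length+v.length+1)
            (by omega) (by omega)
          have b2 : wv (Wg u v) (u.length+v.length+1-1) = 1 := by
            have e : u.length + v.length + 1 - 1 = u.length + 1 := by omega
            rw [e]; exact wv_Wg_mid u v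
          rw [b1, b2]
          omega
        · have b1 := wv_Wg_right (u := u) (v := v) (i := u.length+v.length+1)
            (by omega) (by omega)
          have b2 := wv_Wg_right (u := u) (v := v) (i := u.length+v.length)
            (by omega) (by omega)
          have e0 : u.length + v.length + 1 - 1 = u.length + v.length := by omega
          rw [e0, b1, b2]
          have e1 : u.length + v.length + 1 - u.length - 1 = v.length := by omega
          have e2 : u.length + v.length - u.length - 1 = v.length - 1 := by omega
          rw [e1, e2]
          intro c
          exact hv2 (by omega)

end Slemmas
/-! ### the finset of 312-avoiding words and the decomposition -/

noncomputable def A (n : ℕ) : Finset (List ℕ) := (Wfull n).filter lAv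

lemma mem_A {n : ℕ} {l : List ℕ} : l ∈ A n ↔ l ∈ Wfull n ∧ lAv l := Finset.mem_filter

lemma bounds_of_Wfull {k : ℕ} {l : List ℕ} (h : l ∈ Wfull k) :
    ∀ x ∈ l, 1 ≤ x ∧ x ≤ l.length := by
  intro x hx
  rw [length_of_mem_Wfull h]
  exact mem_of_mem_Wfull h hx

lemma bounds_of_A {k : ℕ} {l : List ℕ} (h : l ∈ A k) :
    ∀ x ∈ l, 1 ≤ x ∧ x ≤ l.length := bounds_of_Wfull (mem_A.mp h).1

lemma length_of_A {k : ℕ} {l : List ℕ} (h : l ∈ A k) : l.length = k :=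
  length_of_mem_Wfull (mem_A.mp h).1

lemma glue_mem {a b : ℕ} {u v : List ℕ} (hu : u ∈ A a) (hv : v ∈ A b) :
    Wg u v ∈ A (a + b + 1) := by
  have hua : u.length = a := length_of_A hu
  have hvb : v.length = b := length_of_A hv
  obtain ⟨huw, huav⟩ := mem_A.mp hu
  obtain ⟨hvw, hvav⟩ := mem_A.mp hv
  have hund := (mem_Wfull.mp huw).1
  have hvnd := (mem_Wfull.mp hvw).1
  have huts := (mem_Wfull.mp huw).2
  have hvts := (mem_Wfull.mp hvw).2
  rw [mem_A]
  refine ⟨mem_Wfull.mpr ⟨?_, ?_⟩, (S3 (bounds_of_A hu) (bounds_of_A hv)).mpr ⟨huav, hvav⟩⟩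
  · -- nodup
    unfold Wg
    rw [List.nodup_append]
    refine ⟨hund.map (fun x y h => by omega), ?_, ?_⟩
    · rw [List.nodup_cons]
      constructor
      · intro hmem
        simp only [List.mem_map] at hmem
        obtain ⟨x, hx, hx2⟩ := hmem
        have := mem_of_mem_Wfull hvw hx
        omega
      · exact hvnd.map (fun x y h => by omega)
    · intro x hx y hy hxy
      simp only [List.mem_map] at hx
      obtain ⟨x', hx', rfl⟩ := hx
      subst hxy
      have hb1 := mem_of_mem_Wfull huw hx'
      rcases List.mem_cons.mp hy with h | h
      · omega
      · simp only [List.mem_map] at h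
        obtain ⟨y', hy', hy2⟩ := h
        have hb2 := mem_of_mem_Wfull hvw hy'
        omega
  · -- toFinset
    unfold Wg
    rw [List.toFinset_append, List.toFinset_cons, list_toFinset_map, list_toFinset_map,
      huts, hvts]
    ext x
    simp only [Finset.mem_union, Finset.mem_insert, Finset.mem_image, Finset.mem_Icc, hua]
    constructor
    · rintro (⟨y, hy, rfl⟩ | h | ⟨y, hy, rfl⟩) <;> omega
    · intro hx
      by_cases h1 : x = 1
      · exact Or.inr (Or.inl h1)
      by_cases h2 : x ≤ a + 1
      · exact Or.inl ⟨x - 1, ⟨by omega, by omega⟩, by omega⟩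
      · exact Or.inr (Or.inr ⟨x - (a+1), ⟨by omega, by omega⟩, by omega⟩)

lemma decomp {n : ℕ} {l : List ℕ} (hl : l ∈ A n) (hn : 1 ≤ n) :
    ∃ u v : List ℕ, u ∈ A u.length ∧ v ∈ A v.length ∧
      u.length + v.length + 1 = n ∧ l = Wg u v := by
  obtain ⟨hw, hav⟩ := mem_A.mp hl
  have hnd := (mem_Wfull.mp hw).1
  have hts := (mem_Wfull.mp hw).2
  have hlen : l.length = n := length_of_mem_Wfull hw
  have h1l : 1 ∈ l := by
    rw [← List.mem_toFinset, hts, Finset.mem_Icc]; omega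
  have hpl : l.idxOf 1 < l.length := List.idxOf_lt_length_iff.mpr h1l
  set p := l.idxOf 1 with hp
  set u := l.take p with hu
  set v := l.drop (p+1) with hvd
  have hul : u.length = p := by rw [hu, List.length_take]; omega
  have hvl : v.length = n - p - 1 := by rw [hvd, List.length_drop]; omega
  have hsplit : l = u ++ 1 :: v := by
    have h2 : l.drop p = l[p] :: l.drop (p+1) := List.drop_eq_getElem_cons hpl
    have h3 : l[p]'hpl = 1 := List.getElem_idxOf hpl
    rw [h3] at h2
    rw [hu, hvd, ← h2, List.take_append_drop]
  -- nodup structure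
  have hnd2 := hnd
  rw [hsplit, List.nodup_append, List.nodup_cons] at hnd2
  obtain ⟨hund, ⟨h1v, hvnd⟩, hdisj⟩ := hnd2
  -- wv values of l
  have wv_u : ∀ i₀, i₀ < p → wv l (i₀+1) = u.getD i₀ 0 := by
    intro i₀ hi₀
    unfold wv
    rw [if_neg (by omega)]
    have : (i₀ + 1 - 1) = i₀ := by omega
    rw [this, List.getD_eq_getElem?_getD]
    congr 1
    rw [hsplit, List.getElem?_append, if_pos (by omega)]
  have wv_p : wv l (p+1) = 1 := by
    unfold wv
    rw [if_neg (by omega)]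
    have : (p + 1 - 1) = p := by omega
    rw [this, hsplit, List.getElem?_append_right (by omega)]
    rw [hul]
    simp
  have wv_v : ∀ k₀, k₀ < v.length → wv l (p+k₀+2) = v.getD k₀ 0 := by
    intro k₀ hk₀
    unfold wv
    rw [if_neg (by omega)]
    rw [List.getD_eq_getElem?_getD]
    congr 1
    rw [hsplit, List.getElem?_append_right (by omega)]
    have : p + k₀ + 2 - 1 - u.length = k₀ + 1 := by omega
    rw [this, List.getElem?_cons_succ]
  -- the ordering claim
  have hlt : ∀ x ∈ u, ∀ y ∈ v, x < y := by
    intro x hx y hy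
    obtain ⟨i₀, hi₀, hxi⟩ := List.mem_iff_getElem.mp hx
    obtain ⟨k₀, hk₀, hyk⟩ := List.mem_iff_getElem.mp hy
    have hxv : wv l (i₀+1) = x := by
      rw [wv_u i₀ (by omega), List.getD_eq_getElem?_getD,
        List.getElem?_eq_getElem (by omega), hxi]
      rfl
    have hyv : wv l (p+k₀+2) = y := by
      rw [wv_v k₀ hk₀, List.getD_eq_getElem?_getD,
        List.getElem?_eq_getElem hk₀, hyk]
      rfl
    have hyl : y ∈ l := by
      rw [hsplit]
      exact List.mem_append_right _ (List.mem_cons_of_mem _ hy)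
    have hy1 : 1 ≤ y ∧ y ≤ n := mem_of_mem_Wfull hw hyl
    have hyne1 : y ≠ 1 := fun h => h1v (h ▸ hy)
    have hxyne : x ≠ y := fun h => hdisj x hx y (List.mem_cons_of_mem _ hy) h
    have h' := hav (i₀+1) (by rw [hlen, Finset.mem_Icc]; omega)
      (p+1) (by rw [hlen, Finset.mem_Icc]; omega)
      (p+k₀+2) (by rw [hlen, Finset.mem_Icc]; omega)
      (by omega) (by omega)
    rw [hxv, hyv, wv_p] at h'
    by_contra hcon
    exact h' ⟨by omega, by omega⟩
  -- toFinset structure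
  have htsplit : u.toFinset ∪ insert 1 v.toFinset = Finset.Icc 1 n := by
    rw [← hts, hsplit, List.toFinset_append, List.toFinset_cons]
  have hbu : ∀ x ∈ u, 2 ≤ x ∧ x ≤ n := by
    intro x hx
    have hxl : x ∈ l := by rw [hsplit]; exact List.mem_append_left _ hx
    have := mem_of_mem_Wfull hw hxl
    have hne : x ≠ 1 := by
      intro h
      exact hdisj x hx 1 (by simp) h
    omega
  have hbv : ∀ x ∈ v, 2 ≤ x ∧ x ≤ n := by
    intro x hx
    have hxl : x ∈ l := by
      rw [hsplit]; exact List.mem_append_right _ (List.mem_cons_of_mem _ hx)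
    have := mem_of_mem_Wfull hw hxl
    have hne : x ≠ 1 := fun h => h1v (h ▸ hx)
    omega
  -- S = Icc 2 (p+1)
  have hScard : u.toFinset.card = p := by rw [List.toFinset_card_of_nodup hund, hul]
  have hdown : ∀ x ∈ u.toFinset, ∀ y, 2 ≤ y → y ≤ x → y ∈ u.toFinset := by
    intro x hx y hy2 hyx
    rw [List.mem_toFinset] at hx ⊢
    have hxb := hbu x hx
    have hyIcc : y ∈ Finset.Icc 1 n := Finset.mem_Icc.mpr (by omega)
    rw [← htsplit, Finset.mem_union, Finset.mem_insert] at hyIcc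
    rcases hyIcc with h | h | h
    · exact List.mem_toFinset.mp h
    · omega
    · exfalso
      have := hlt x hx y (List.mem_toFinset.mp h)
      omega
  have hSsub : u.toFinset ⊆ Finset.Icc 2 (p+1) := by
    intro x hx
    have hxb := hbu x (List.mem_toFinset.mp hx)
    have hsub2 : Finset.Icc 2 x ⊆ u.toFinset := fun y hy => by
      rw [Finset.mem_Icc] at hy
      exact hdown x hx y hy.1 hy.2
    have := Finset.card_le_card hsub2
    rw [Nat.card_Icc, hScard] at this
    rw [Finset.mem_Icc]
    omega
  have hS : u.toFinset = Finset.Icc 2 (p+1) :=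
    Finset.eq_of_subset_of_card_le hSsub (by rw [Nat.card_Icc, hScard]; omega)
  have hT : v.toFinset = Finset.Icc (p+2) n := by
    ext x
    constructor
    · intro hx
      have hxb := hbv x (List.mem_toFinset.mp hx)
      have hnotS : x ∉ u.toFinset := by
        rw [List.mem_toFinset]
        intro hmem
        exact hdisj x hmem x (List.mem_cons_of_mem _ (List.mem_toFinset.mp hx)) rfl
      rw [hS, Finset.mem_Icc] at hnotS
      rw [Finset.mem_Icc]
      omega
    · intro hx
      rw [Finset.mem_Icc] at hx
      have : x ∈ Finset.Icc 1 n := Finset.mem_Icc.mpr (by omega)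
      rw [← htsplit, Finset.mem_union, Finset.mem_insert] at this
      rcases this with h | h | h
      · exfalso
        have := hSsub h
        rw [Finset.mem_Icc] at this
        omega
      · omega
      · exact h
  -- bounds from the interval descriptions
  have hbu' : ∀ y ∈ u, 2 ≤ y ∧ y ≤ p+1 := by
    intro y hy
    have : y ∈ u.toFinset := List.mem_toFinset.mpr hy
    rw [hS, Finset.mem_Icc] at this
    exact this
  have hbv' : ∀ y ∈ v, p+2 ≤ y ∧ y ≤ n := by
    intro y hy
    have : y ∈ v.toFinset := List.mem_toFinset.mpr hy
    rw [hT, Finset.mem_Icc] at this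
    exact this
  have hu0len : (u.map (· - 1)).length = p := by rw [List.length_map, hul]
  have hv0len : (v.map (· - (p+1))).length = n - p - 1 := by rw [List.length_map, hvl]
  have hWg : l = Wg (u.map (· - 1)) (v.map (· - (p+1))) := by
    unfold Wg
    rw [hu0len]
    have e1 : (u.map (· - 1)).map (·+1) = u := by
      rw [List.map_map]
      exact ((List.map_congr_left (fun x hx => by have := hbu' x hx; simp; omega)).trans
        (List.map_id u))
    have e2 : (v.map (· - (p+1))).map (· + (p+1)) = v := by
      rw [List.map_map]
      exact ((List.map_congr_left (fun x hx => by have := hbv' x hx; simp; omega)).trans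
        (List.map_id v))
    rw [e1, e2, ← hsplit]
  have hbounds_u : ∀ x ∈ u.map (· - 1), 1 ≤ x ∧ x ≤ (u.map (· - 1)).length := by
    intro x hx
    rw [hu0len]
    simp only [List.mem_map] at hx
    obtain ⟨y, hy, rfl⟩ := hx
    have := hbu' y hy
    omega
  have hbounds_v : ∀ x ∈ v.map (· - (p+1)), 1 ≤ x ∧ x ≤ (v.map (· - (p+1))).length := by
    intro x hx
    rw [hv0len]
    simp only [List.mem_map] at hx
    obtain ⟨y, hy, rfl⟩ := hx
    have := hbv' y hy
    omega
  have hav2 : lAv (Wg (u.map (· - 1)) (v.map (· - (p+1)))) := hWg ▸ hav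
  obtain ⟨havu, havv⟩ := (S3 hbounds_u hbounds_v).mp hav2
  have huW : (u.map (· - 1)) ∈ Wfull ((u.map (· - 1)).length) := by
    rw [hu0len, mem_Wfull]
    constructor
    · exact hund.map_on (fun x hx y hy h => by
        have := hbu' x hx; have := hbu' y hy; omega)
    · rw [list_toFinset_map, hS]
      ext x
      simp only [Finset.mem_image, Finset.mem_Icc]
      constructor
      · rintro ⟨y, hy, rfl⟩; omega
      · intro hx; exact ⟨x + 1, by omega, by omega⟩
  have hvW : (v.map (· - (p+1))) ∈ Wfull ((v.map (· - (p+1))).length) := by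
    rw [hv0len, mem_Wfull]
    constructor
    · exact hvnd.map_on (fun x hx y hy h => by
        have := hbv' x hx; have := hbv' y hy; omega)
    · rw [list_toFinset_map, hT]
      ext x
      simp only [Finset.mem_image, Finset.mem_Icc]
      constructor
      · rintro ⟨y, hy, rfl⟩; omega
      · intro hx; exact ⟨x + (p+1), by omega, by omega⟩
  exact ⟨u.map (· - 1), v.map (· - (p+1)),
    mem_A.mpr ⟨huW, havu⟩, mem_A.mpr ⟨hvW, havv⟩, by omega, hWg⟩
/-! ### decomposition as a sum identity -/

noncomputable def sigmaA (n : ℕ) : Finset ((_ : ℕ) × (List ℕ × List ℕ)) :=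
  (Finset.Icc 1 n).sigma (fun m => (A (m-1)) ×ˢ (A (n-m)))

lemma wv_congr {l l' : List ℕ} (h : l = l') (i : ℕ) : wv l i = wv l' i := by rw [h]

lemma glue_inj {n : ℕ} : ∀ x ∈ sigmaA n, ∀ y ∈ sigmaA n,
    Wg x.2.1 x.2.2 = Wg y.2.1 y.2.2 → x = y := by
  rintro ⟨mx, ux, vx⟩ hx ⟨my, uy, vy⟩ hy h
  dsimp only at h
  simp only [sigmaA, Finset.mem_sigma, Finset.mem_product, Finset.mem_Icc] at hx hy
  obtain ⟨hmx, hux, hvx⟩ := hx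
  obtain ⟨hmy, huy, hvy⟩ := hy
  have lux := length_of_A hux
  have luy := length_of_A huy
  have lvx := length_of_A hvx
  have lvy := length_of_A hvy
  have hlenWg := congrArg List.length h
  rw [lenWg, lenWg] at hlenWg
  have hlen : ux.length = uy.length := by
    by_contra hne
    rcases Nat.lt_or_ge ux.length uy.length with hlt | hge
    · have b1 : wv (Wg ux vx) (ux.length + 1) = 1 := wv_Wg_mid ux vx
      have b2 : wv (Wg uy vy) (ux.length + 1) = wv uy (ux.length + 1) + 1 :=
        wv_Wg_left (by omega) (by omega)
      have b3 := wv_bounds (bounds_of_A huy) (i := ux.length + 1) (by omega) (by omega)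
      have := wv_congr h (ux.length + 1)
      omega
    · have hgt : uy.length < ux.length := by omega
      have b1 : wv (Wg uy vy) (uy.length + 1) = 1 := wv_Wg_mid uy vy
      have b2 : wv (Wg ux vx) (uy.length + 1) = wv ux (uy.length + 1) + 1 :=
        wv_Wg_left (by omega) (by omega)
      have b3 := wv_bounds (bounds_of_A hux) (i := uy.length + 1) (by omega) (by omega)
      have := wv_congr h (uy.length + 1)
      omega
  have hm : mx = my := by omega
  unfold Wg at h
  have hmaplen : (ux.map (·+1)).length = (uy.map (·+1)).length := by
    rw [List.length_map, List.length_map, hlen]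
  obtain ⟨h1, h2⟩ := List.append_inj h hmaplen
  have hu : ux = uy := List.map_injective_iff.mpr (fun a b hab => by omega) h1
  rw [List.cons.injEq] at h2
  have hvv : vx.map (· + (ux.length + 1)) = vy.map (· + (uy.length + 1)) := h2.2
  rw [hlen] at hvv
  have hv : vx = vy := List.map_injective_iff.mpr (fun a b hab => by omega) hvv
  subst hm hu hv
  rfl

lemma glue_image {n : ℕ} (hn : 1 ≤ n) :
    (sigmaA n).image (fun x => Wg x.2.1 x.2.2) = A n := by
  apply Finset.Subset.antisymm
  · intro l hl
    obtain ⟨⟨m, u, v⟩, hx, rfl⟩ := Finset.mem_image.mp hl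
    simp only [sigmaA, Finset.mem_sigma, Finset.mem_product, Finset.mem_Icc] at hx
    obtain ⟨hm, hu, hv⟩ := hx
    have hmem := glue_mem hu hv
    have e : (m-1) + (n-m) + 1 = n := by omega
    rwa [e] at hmem
  · intro l hl
    obtain ⟨u, v, hu, hv, hsum, rfl⟩ := decomp hl hn
    refine Finset.mem_image.mpr ⟨⟨u.length+1, u, v⟩, ?_, rfl⟩
    simp only [sigmaA, Finset.mem_sigma, Finset.mem_product, Finset.mem_Icc]
    refine ⟨⟨by omega, by omega⟩, ?_, ?_⟩
    · simpa using hu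
    · have e : n - (u.length+1) = v.length := by omega
      rw [e]; exact hv

lemma glue_sum {M : Type} [AddCommMonoid M] {n : ℕ} (hn : 1 ≤ n) (F : List ℕ → M) :
    ∑ l ∈ A n, F l = ∑ x ∈ sigmaA n, F (Wg x.2.1 x.2.2) := by
  rw [← glue_image hn, Finset.sum_image glue_inj]

/-! ### small cases -/

lemma lAv_nil : lAv ([] : List ℕ) := by
  intro i hi
  simp at hi

lemma lAv_one : lAv ([1] : List ℕ) := by
  intro i hi j hj k hk hij hjk
  simp only [List.length_cons, List.length_nil, Finset.mem_Icc] at hi hj hk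
  omega

lemma A_zero : A 0 = {([] : List ℕ)} := by
  ext l
  rw [mem_A, mem_Wfull]
  simp only [Finset.mem_singleton]
  constructor
  · rintro ⟨⟨hnd, hts⟩, _⟩
    have : l.toFinset = ∅ := by rw [hts]; simp
    simpa using this
  · rintro rfl
    exact ⟨⟨List.nodup_nil, by simp⟩, lAv_nil⟩

lemma A_one : A 1 = {([1] : List ℕ)} := by
  ext l
  rw [mem_A, mem_Wfull]
  simp only [Finset.mem_singleton]
  constructor
  · rintro ⟨⟨hnd, hts⟩, _⟩
    have hlen : l.length = 1 := by
      have := List.toFinset_card_of_nodup hnd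
      rw [hts] at this
      simpa using this.symm
    obtain ⟨a, rfl⟩ := List.length_eq_one_iff.mp hlen
    have : a ∈ [a].toFinset := by simp
    rw [hts] at this
    simp only [Finset.mem_Icc] at this
    have : a = 1 := by omega
    rw [this]
  · rintro rfl
    refine ⟨⟨by simp, by simp⟩, lAv_one⟩

lemma lDes_nil : lDes ([] : List ℕ) = 0 := by
  unfold lDes lDesSet
  simp

lemma lDes_one : lDes ([1] : List ℕ) = 0 := by
  unfold lDes lDesSet
  simp

lemma lPk_nil : lPk ([] : List ℕ) := by
  constructor
  · intro i hi; simp at hi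
  · simp [wv_zero]

lemma lPk_one : lPk ([1] : List ℕ) := by
  constructor
  · intro i hi; simp at hi
  · intro h
    have h0 : wv [1] 0 = 0 := wv_zero _
    simp only [List.length_cons, List.length_nil] at h
    rw [(by norm_num : (0+1) - 1 = 0), h0] at h
    omega

lemma bounds_nil : ∀ x ∈ ([] : List ℕ), 1 ≤ x ∧ x ≤ ([] : List ℕ).length := by
  intro x hx; simp at hx

/-! ### the expanded recursion -/

lemma glue_expand {M : Type} [AddCommMonoid M] {n : ℕ} (hn : 2 ≤ n) (F : List ℕ → M) :
    ∑ l ∈ A n, F l =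
      ((∑ v ∈ A (n-1), F (Wg [] v)) + (∑ u ∈ A (n-1), F (Wg u []))) +
      ∑ m ∈ Finset.Icc 2 (n-1), ∑ u ∈ A (m-1), ∑ v ∈ A (n-m), F (Wg u v) := by
  rw [glue_sum (by omega) F]
  unfold sigmaA
  rw [Finset.sum_sigma]
  have hsplit : Finset.Icc 1 n = insert 1 (insert n (Finset.Icc 2 (n-1))) := by
    ext x
    simp only [Finset.mem_Icc, Finset.mem_insert]
    omega
  rw [hsplit, Finset.sum_insert (by simp only [Finset.mem_insert, Finset.mem_Icc]; omega),
    Finset.sum_insert (by simp only [Finset.mem_Icc]; omega)]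
  have e1 : ∀ m : ℕ, (∑ p ∈ (A (m-1)) ×ˢ (A (n-m)), F (Wg p.1 p.2)) =
      ∑ u ∈ A (m-1), ∑ v ∈ A (n-m), F (Wg u v) := fun m => Finset.sum_product _ _ _
  rw [add_assoc] at *
  congr 1
  · -- m = 1 piece
    rw [show (1:ℕ) - 1 = 0 from rfl, A_zero]
    rw [Finset.sum_product]
    rw [Finset.sum_singleton]
  congr 1
  · -- m = n piece
    rw [show n - n = 0 by omega, A_zero]
    rw [Finset.sum_product]
    apply Finset.sum_congr rfl
    intro u hu
    rw [Finset.sum_singleton]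
  · apply Finset.sum_congr rfl
    intro m hm
    exact e1 m
/-! ### descent bound for Pk words -/

lemma des_bound {l : List ℕ} (h : lPk l) : 2 * lDes l ≤ l.length - 1 := by
  obtain ⟨h1, h2⟩ := h
  have hmemD : ∀ x ∈ lDesSet l, (1 ≤ x ∧ x ≤ l.length - 1) ∧ wv l (x+1) < wv l x := by
    intro x hx
    unfold lDesSet at hx
    simp only [Finset.mem_filter, Finset.mem_Icc] at hx
    exact hx
  have hsub : lDesSet l ⊆ Finset.Icc 1 (l.length - 2) := by
    intro x hx
    obtain ⟨⟨hx1, hx2⟩, hxd⟩ := hmemD x hx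
    simp only [Finset.mem_Icc]
    refine ⟨hx1, ?_⟩
    by_contra hcon
    have hxe : x = l.length - 1 := by omega
    have hlen2 : 2 ≤ l.length := by omega
    apply h2
    have e1 : l.length = x + 1 := by omega
    have e2 : l.length - 1 = x := by omega
    have e3 : x + 1 - 1 = x := by omega
    rw [e1, e3]
    exact hxd
  have himg : (lDesSet l).image (·+1) ⊆ Finset.Icc 2 (l.length - 1) := by
    intro x hx
    simp only [Finset.mem_image] at hx
    obtain ⟨y, hy, rfl⟩ := hx
    have := hsub hy
    simp only [Finset.mem_Icc] at this ⊢
    omega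
  have hdisj : Disjoint (lDesSet l) ((lDesSet l).image (·+1)) := by
    rw [Finset.disjoint_left]
    intro x hx hx'
    simp only [Finset.mem_image] at hx'
    obtain ⟨y, hy, rfl⟩ := hx'
    obtain ⟨⟨hy1, hy2⟩, hyd⟩ := hmemD y hy
    obtain ⟨⟨hx1, hx2⟩, hxd⟩ := hmemD (y+1) hx
    have hmem : y + 1 ∈ Finset.Icc 2 (l.length - 1) := Finset.mem_Icc.mpr (by omega)
    have := h1 (y+1) hmem
    have e : y + 1 - 1 = y := by omega
    rw [e] at this
    have e : y + 1 + 1 = y + 2 := by omega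
    rw [e] at hxd
    exact this ⟨hyd, hxd⟩
  have hcard : (lDesSet l ∪ (lDesSet l).image (·+1)).card ≤ l.length - 1 := by
    have hsub2 : lDesSet l ∪ (lDesSet l).image (·+1) ⊆ Finset.Icc 1 (l.length - 1) := by
      intro x hx
      rcases Finset.mem_union.mp hx with h | h
      · have := hsub h; simp only [Finset.mem_Icc] at this ⊢; omega
      · have := himg h; simp only [Finset.mem_Icc] at this ⊢; omega
    have := Finset.card_le_card hsub2
    rwa [Nat.card_Icc, Nat.add_sub_cancel] at this
  rw [Finset.card_union_of_disjoint hdisj,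
    Finset.card_image_of_injective _ (add_left_injective 1)] at hcard
  unfold lDes
  omega

/-! ### the polynomials -/

noncomputable def Lp (n : ℕ) : Polynomial ℤ := ∑ l ∈ A n, X ^ lDes l

noncomputable def Gp (n : ℕ) : Polynomial ℤ :=
  ∑ l ∈ A n, if lPk l then X ^ lDes l * (1+X) ^ (n - 1 - 2 * lDes l) else 0

noncomputable def Pp (n : ℕ) : Polynomial ℤ :=
  ∑ l ∈ A n, if lPk l then X ^ lDes l else 0

lemma Lp_one : Lp 1 = 1 := by
  unfold Lp
  rw [A_one, Finset.sum_singleton, lDes_one, pow_zero]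

lemma Gp_one : Gp 1 = 1 := by
  unfold Gp
  rw [A_one, Finset.sum_singleton, if_pos lPk_one, lDes_one]
  simp

lemma Pp_one : Pp 1 = 1 := by
  unfold Pp
  rw [A_one, Finset.sum_singleton, if_pos lPk_one, lDes_one, pow_zero]

/-! ### recurrences -/

lemma Wg_nil_left_des {v : List ℕ} (hv : ∀ x ∈ v, 1 ≤ x ∧ x ≤ v.length) :
    lDes (Wg [] v) = lDes v := by
  rw [S1 bounds_nil hv]
  simp [lDes_nil]

lemma Wg_nil_right_des {u : List ℕ} (hu : ∀ x ∈ u, 1 ≤ x ∧ x ≤ u.length)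
    (hu0 : u.length ≠ 0) : lDes (Wg u []) = lDes u + 1 := by
  rw [S1 hu bounds_nil]
  simp [lDes_nil, hu0]

lemma Lp_rec {n : ℕ} (hn : 2 ≤ n) :
    Lp n = Lp (n-1) * (1+X) +
      ∑ m ∈ Finset.Icc 2 (n-1), Lp (m-1) * Lp (n-m) * X := by
  unfold Lp
  rw [glue_expand hn]
  congr 1
  · -- the two boundary pieces
    rw [mul_add, mul_one]
    congr 1
    · apply Finset.sum_congr rfl
      intro v hv
      rw [Wg_nil_left_des (bounds_of_A hv)]
    · rw [Finset.sum_mul]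
      apply Finset.sum_congr rfl
      intro u hu
      have hlen : u.length = n - 1 := length_of_A hu
      rw [Wg_nil_right_des (bounds_of_A hu) (by omega), pow_succ]
  · apply Finset.sum_congr rfl
    intro m hm
    simp only [Finset.mem_Icc] at hm
    rw [Finset.sum_mul_sum, Finset.sum_mul]
    apply Finset.sum_congr rfl
    intro u hu
    rw [Finset.sum_mul]
    apply Finset.sum_congr rfl
    intro v hv
    have hlu : u.length = m - 1 := length_of_A hu
    rw [S1 (bounds_of_A hu) (bounds_of_A hv), if_neg (by omega)]
    rw [pow_add, pow_add, pow_one]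

lemma Gp_rec {n : ℕ} (hn : 2 ≤ n) :
    Gp n = Gp (n-1) * (1+X) +
      ∑ m ∈ Finset.Icc 2 (n-1), Gp (m-1) * Gp (n-m) * X := by
  unfold Gp
  rw [glue_expand hn]
  congr 1
  · -- boundary pieces: second piece is 0
    have hzero : (∑ u ∈ A (n-1), if lPk (Wg u []) then
        (X : Polynomial ℤ) ^ lDes (Wg u []) * (1+X) ^ (n - 1 - 2 * lDes (Wg u [])) else 0) = 0 := by
      apply Finset.sum_eq_zero
      intro u hu
      have hlen : u.length = n - 1 := length_of_A hu
      rw [if_neg]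
      rw [S2 (bounds_of_A hu) bounds_nil]
      rintro ⟨-, -, hc⟩
      simp only [List.length_nil] at hc
      omega
    rw [hzero, add_zero, Finset.sum_mul]
    apply Finset.sum_congr rfl
    intro v hv
    have hlen : v.length = n - 1 := length_of_A hv
    have hPk : lPk (Wg [] v) ↔ lPk v := by
      rw [S2 bounds_nil (bounds_of_A hv)]
      simp only [List.length_nil]
      constructor
      · rintro ⟨-, h, -⟩; exact h
      · intro h; exact ⟨lPk_nil, h, Or.inl trivial⟩
    by_cases hP : lPk v
    · rw [if_pos (hPk.mpr hP), if_pos hP]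
      rw [Wg_nil_left_des (bounds_of_A hv)]
      have hb := des_bound hP
      rw [hlen] at hb
      have e : n - 1 - 2 * lDes v = ((n-1) - 1 - 2 * lDes v) + 1 := by omega
      rw [e, pow_succ]
      ring
    · rw [if_neg (fun hh => hP (hPk.mp hh)), if_neg hP, zero_mul]
  · apply Finset.sum_congr rfl
    intro m hm
    simp only [Finset.mem_Icc] at hm
    rw [Finset.sum_mul_sum, Finset.sum_mul]
    apply Finset.sum_congr rfl
    intro u hu
    rw [Finset.sum_mul]
    apply Finset.sum_congr rfl
    intro v hv
    have hlu : u.length = m - 1 := length_of_A hu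
    have hlv : v.length = n - m := length_of_A hv
    have hPk : lPk (Wg u v) ↔ lPk u ∧ lPk v := by
      rw [S2 (bounds_of_A hu) (bounds_of_A hv)]
      constructor
      · rintro ⟨h1, h2, -⟩; exact ⟨h1, h2⟩
      · rintro ⟨h1, h2⟩; exact ⟨h1, h2, Or.inr (by omega)⟩
    by_cases hPu : lPk u <;> by_cases hPv : lPk v
    · rw [if_pos (hPk.mpr ⟨hPu, hPv⟩), if_pos hPu, if_pos hPv]
      rw [S1 (bounds_of_A hu) (bounds_of_A hv), if_neg (by omega)]
      have hbu := des_bound hPu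
      have hbv := des_bound hPv
      rw [hlu] at hbu
      rw [hlv] at hbv
      have e : n - 1 - 2 * (lDes u + lDes v + 1) =
          ((m-1) - 1 - 2 * lDes u) + ((n-m) - 1 - 2 * lDes v) := by omega
      rw [e, pow_add, pow_add, pow_add, pow_one]
      ring
    · rw [if_neg (fun hh => hPv (hPk.mp hh).2), if_neg hPv]
      simp
    · rw [if_neg (fun hh => hPu (hPk.mp hh).1), if_neg hPu]
      simp
    · rw [if_neg (fun hh => hPu (hPk.mp hh).1), if_neg hPu]
      simp

lemma Pp_rec {n : ℕ} (hn : 2 ≤ n) :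
    Pp n = Pp (n-1) +
      ∑ m ∈ Finset.Icc 2 (n-1), Pp (m-1) * Pp (n-m) * X := by
  unfold Pp
  rw [glue_expand hn]
  congr 1
  · have hzero : (∑ u ∈ A (n-1), if lPk (Wg u []) then (X : Polynomial ℤ) ^ lDes (Wg u []) else 0) = 0 := by
      apply Finset.sum_eq_zero
      intro u hu
      have hlen : u.length = n - 1 := length_of_A hu
      rw [if_neg]
      rw [S2 (bounds_of_A hu) bounds_nil]
      rintro ⟨-, -, hc⟩
      simp only [List.length_nil] at hc
      omega
    rw [hzero, add_zero]
    apply Finset.sum_congr rfl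
    intro v hv
    have hPk : lPk (Wg [] v) ↔ lPk v := by
      rw [S2 bounds_nil (bounds_of_A hv)]
      simp only [List.length_nil]
      constructor
      · rintro ⟨-, h, -⟩; exact h
      · intro h; exact ⟨lPk_nil, h, Or.inl trivial⟩
    by_cases hP : lPk v
    · rw [if_pos (hPk.mpr hP), if_pos hP, Wg_nil_left_des (bounds_of_A hv)]
    · rw [if_neg (fun hh => hP (hPk.mp hh)), if_neg hP]
  · apply Finset.sum_congr rfl
    intro m hm
    simp only [Finset.mem_Icc] at hm
    rw [Finset.sum_mul_sum, Finset.sum_mul]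
    apply Finset.sum_congr rfl
    intro u hu
    rw [Finset.sum_mul]
    apply Finset.sum_congr rfl
    intro v hv
    have hlu : u.length = m - 1 := length_of_A hu
    have hlv : v.length = n - m := length_of_A hv
    have hPk : lPk (Wg u v) ↔ lPk u ∧ lPk v := by
      rw [S2 (bounds_of_A hu) (bounds_of_A hv)]
      constructor
      · rintro ⟨h1, h2, -⟩; exact ⟨h1, h2⟩
      · rintro ⟨h1, h2⟩; exact ⟨h1, h2, Or.inr (by omega)⟩
    by_cases hPu : lPk u <;> by_cases hPv : lPk v
    · rw [if_pos (hPk.mpr ⟨hPu, hPv⟩), if_pos hPu, if_pos hPv]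
      rw [S1 (bounds_of_A hu) (bounds_of_A hv), if_neg (by omega)]
      rw [pow_add, pow_add, pow_one]
    · rw [if_neg (fun hh => hPv (hPk.mp hh).2), if_neg hPv]
      simp
    · rw [if_neg (fun hh => hPu (hPk.mp hh).1), if_neg hPu]
      simp
    · rw [if_neg (fun hh => hPu (hPk.mp hh).1), if_neg hPu]
      simp

lemma L_eq_G : ∀ n : ℕ, 1 ≤ n → Lp n = Gp n := by
  intro n
  induction n using Nat.strong_induction_on with
  | _ n ih =>
    intro hn
    rcases Nat.eq_or_lt_of_le hn with h1 | h2
    · rw [← h1, Lp_one, Gp_one]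
    · have hn2 : 2 ≤ n := h2
      rw [Lp_rec hn2, Gp_rec hn2, ih (n-1) (by omega) (by omega)]
      congr 1
      apply Finset.sum_congr rfl
      intro m hm
      simp only [Finset.mem_Icc] at hm
      rw [ih (m-1) (by omega) (by omega), ih (n-m) (by omega) (by omega)]
/-! ### noncrossing arc sets -/

def Arcs (m : ℕ) : Finset (ℕ × ℕ) :=
  ((Finset.Icc 1 m) ×ˢ (Finset.Icc 1 m)).filter (fun p => p.1 < p.2)

lemma mem_Arcs {m : ℕ} {p : ℕ × ℕ} :
    p ∈ Arcs m ↔ 1 ≤ p.1 ∧ p.1 < p.2 ∧ p.2 ≤ m := by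
  unfold Arcs
  rw [Finset.mem_filter, Finset.mem_product]
  simp only [Finset.mem_Icc]
  constructor
  · rintro ⟨⟨⟨a, b⟩, ⟨c, d⟩⟩, e⟩; exact ⟨a, e, d⟩
  · rintro ⟨a, b, c⟩; exact ⟨⟨⟨a, by omega⟩, ⟨by omega, c⟩⟩, b⟩

noncomputable def NSet (m : ℕ) : Finset (Finset (ℕ × ℕ)) :=
  (Arcs m).powerset.filter (fun S => ∀ p ∈ S, ∀ q ∈ S, p ≠ q → Noncrossing p q)

lemma mem_NSet {m : ℕ} {S : Finset (ℕ × ℕ)} :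
    S ∈ NSet m ↔ S ⊆ Arcs m ∧ ∀ p ∈ S, ∀ q ∈ S, p ≠ q → Noncrossing p q := by
  unfold NSet
  rw [Finset.mem_filter, Finset.mem_powerset]

def shf (a : ℕ) (r : ℕ × ℕ) : ℕ × ℕ := (r.1 + a, r.2 + a)

lemma shf_inj (a : ℕ) : Function.Injective (shf a) := by
  rintro ⟨x1, x2⟩ ⟨y1, y2⟩ h
  unfold shf at h
  simp only [Prod.mk.injEq] at h ⊢
  omega

lemma NC_shift {a : ℕ} {r s : ℕ × ℕ} :
    Noncrossing (shf a r) (shf a s) ↔ Noncrossing r s := by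
  unfold Noncrossing shf
  dsimp only
  constructor <;> rintro ⟨h1, h2, h3, h4, h5, h6⟩ <;>
    exact ⟨by omega, by omega, by omega, by omega, by omega, by omega⟩

lemma NSet_filter_noTop {m : ℕ} (hm : 1 ≤ m) :
    (NSet m).filter (fun S => ∀ r ∈ S, r.2 ≠ m) = NSet (m-1) := by
  ext S
  rw [Finset.mem_filter, mem_NSet, mem_NSet]
  constructor
  · rintro ⟨⟨hsub, hnc⟩, htop⟩
    refine ⟨fun p hp => ?_, hnc⟩
    have h1 := mem_Arcs.mp (hsub hp)
    have h2 := htop p hp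
    exact mem_Arcs.mpr ⟨by omega, by omega, by omega⟩
  · rintro ⟨hsub, hnc⟩
    refine ⟨⟨fun p hp => ?_, hnc⟩, fun p hp => ?_⟩ <;> have := mem_Arcs.mp (hsub hp)
    · exact mem_Arcs.mpr ⟨by omega, by omega, by omega⟩
    · omega

noncomputable def sigmaN (m : ℕ) : Finset ((_ : ℕ) × (Finset (ℕ×ℕ) × Finset (ℕ×ℕ))) :=
  (Finset.Icc 1 (m-1)).sigma (fun a => (NSet (a-1)) ×ˢ (NSet (m-1-a)))

def glueA (m : ℕ) (x : (_ : ℕ) × (Finset (ℕ×ℕ) × Finset (ℕ×ℕ))) : Finset (ℕ×ℕ) :=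
  insert (x.1, m) (x.2.1 ∪ x.2.2.image (shf x.1))

lemma sigmaN_bounds {m a : ℕ} {S₁ S₂ : Finset (ℕ×ℕ)}
    (ha : a ∈ Finset.Icc 1 (m-1)) (h1 : S₁ ∈ NSet (a-1)) (h2 : S₂ ∈ NSet (m-1-a)) :
    (1 ≤ a ∧ a ≤ m - 1) ∧
    (∀ r ∈ S₁, 1 ≤ r.1 ∧ r.1 < r.2 ∧ r.2 ≤ a - 1) ∧
    (∀ r ∈ S₂.image (shf a), a + 1 ≤ r.1 ∧ r.1 < r.2 ∧ r.2 ≤ m - 1) := by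
  simp only [Finset.mem_Icc] at ha
  refine ⟨ha, fun r hr => mem_Arcs.mp ((mem_NSet.mp h1).1 hr), ?_⟩
  intro r hr
  simp only [Finset.mem_image] at hr
  obtain ⟨s, hs, rfl⟩ := hr
  have := mem_Arcs.mp ((mem_NSet.mp h2).1 hs)
  unfold shf
  dsimp only
  omega

lemma glueA_mem {m : ℕ} (hm : 1 ≤ m) {x} (hx : x ∈ sigmaN m) :
    glueA m x ∈ (NSet m).filter (fun S => ¬ ∀ r ∈ S, r.2 ≠ m) := by
  obtain ⟨a, S₁, S₂⟩ := x
  simp only [sigmaN, Finset.mem_sigma, Finset.mem_product] at hx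
  obtain ⟨ha, h1, h2⟩ := hx
  obtain ⟨⟨ha1, ha2⟩, hb1, hb2⟩ := sigmaN_bounds ha h1 h2
  rw [Finset.mem_filter]
  constructor
  · rw [mem_NSet]
    constructor
    · -- subset
      intro r hr
      unfold glueA at hr
      dsimp only at hr
      rcases Finset.mem_insert.mp hr with rfl | hr'
      · exact mem_Arcs.mpr ⟨by omega, by omega, by omega⟩
      rcases Finset.mem_union.mp hr' with h | h
      · have := hb1 r h
        exact mem_Arcs.mpr ⟨by omega, by omega, by omega⟩
      · have := hb2 r h
        exact mem_Arcs.mpr ⟨by omega, by omega, by omega⟩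
    · -- pairwise
      intro p hp q hq hne
      unfold glueA at hp hq
      dsimp only at hp hq
      rcases Finset.mem_insert.mp hp with rfl | hp'
      · rcases Finset.mem_insert.mp hq with heq | hq'
        · exact absurd heq.symm hne
        rcases Finset.mem_union.mp hq' with h | h
        · have := hb1 q h
          unfold Noncrossing
          dsimp only
          omega
        · have := hb2 q h
          unfold Noncrossing
          dsimp only
          omega
      rcases Finset.mem_insert.mp hq with rfl | hq'
      · rcases Finset.mem_union.mp hp' with h | h
        · have := hb1 p h
          unfold Noncrossing
          dsimp only
          omega
        · have := hb2 p h
          unfold Noncrossing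
          dsimp only
          omega
      rcases Finset.mem_union.mp hp' with h | h <;> rcases Finset.mem_union.mp hq' with h' | h'
      · exact (mem_NSet.mp h1).2 p h q h' hne
      · have := hb1 p h
        have := hb2 q h'
        unfold Noncrossing
        omega
      · have := hb2 p h
        have := hb1 q h'
        unfold Noncrossing
        omega
      · simp only [Finset.mem_image] at h h'
        obtain ⟨r, hr, rfl⟩ := h
        obtain ⟨s, hs, rfl⟩ := h'
        have hrs : r ≠ s := fun hh => hne (by rw [hh])
        exact NC_shift.mpr ((mem_NSet.mp h2).2 r hr s hs hrs)
  · -- has a top arc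
    intro hall
    exact hall (a, m) (Finset.mem_insert_self _ _) rfl

lemma glueA_card {m : ℕ} {x} (hx : x ∈ sigmaN m) :
    (glueA m x).card = x.2.1.card + x.2.2.card + 1 := by
  obtain ⟨a, S₁, S₂⟩ := x
  simp only [sigmaN, Finset.mem_sigma, Finset.mem_product] at hx
  obtain ⟨ha, h1, h2⟩ := hx
  obtain ⟨⟨ha1, ha2⟩, hb1, hb2⟩ := sigmaN_bounds ha h1 h2
  unfold glueA
  dsimp only
  rw [Finset.card_insert_of_notMem, Finset.card_union_of_disjoint,
    Finset.card_image_of_injective _ (shf_inj a)]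
  · rw [Finset.disjoint_left]
    intro r hr hr'
    have := hb1 r hr
    have := hb2 r hr'
    omega
  · intro hmem
    rcases Finset.mem_union.mp hmem with h | h
    · have := hb1 _ h
      dsimp only at this
      omega
    · have := hb2 _ h
      dsimp only at this
      omega

lemma glueA_inj {m : ℕ} (hm : 1 ≤ m) : ∀ x ∈ sigmaN m, ∀ y ∈ sigmaN m,
    glueA m x = glueA m y → x = y := by
  rintro ⟨ax, S1x, S2x⟩ hx ⟨ay, S1y, S2y⟩ hy h
  simp only [sigmaN, Finset.mem_sigma, Finset.mem_product] at hx hy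
  obtain ⟨hax, h1x, h2x⟩ := hx
  obtain ⟨hay, h1y, h2y⟩ := hy
  obtain ⟨⟨hax1, hax2⟩, hbx1, hbx2⟩ := sigmaN_bounds hax h1x h2x
  obtain ⟨⟨hay1, hay2⟩, hby1, hby2⟩ := sigmaN_bounds hay h1y h2y
  unfold glueA at h
  dsimp only at h
  -- a's are equal
  have hmemx : (ax, m) ∈ insert (ay, m) (S1y ∪ S2y.image (shf ay)) := by
    rw [← h]; exact Finset.mem_insert_self _ _
  have ha : ax = ay := by
    rcases Finset.mem_insert.mp hmemx with heq | hmem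
    · exact (Prod.mk.injEq .. ▸ heq).1
    rcases Finset.mem_union.mp hmem with hh | hh
    · have := hby1 _ hh; dsimp only at this; omega
    · have := hby2 _ hh; dsimp only at this; omega
  subst ha
  -- S1's are equal
  have hS1 : ∀ (S1 S2 : Finset (ℕ×ℕ)),
      (∀ r ∈ S1, 1 ≤ r.1 ∧ r.1 < r.2 ∧ r.2 ≤ ax - 1) →
      (∀ r ∈ S2.image (shf ax), ax + 1 ≤ r.1 ∧ r.1 < r.2 ∧ r.2 ≤ m - 1) →
      (insert (ax, m) (S1 ∪ S2.image (shf ax))).filter (fun r => r.2 < ax) = S1 := by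
    intro S1 S2 hb1 hb2
    ext r
    rw [Finset.mem_filter]
    constructor
    · rintro ⟨hr, hr2⟩
      rcases Finset.mem_insert.mp hr with rfl | hr'
      · dsimp only at hr2; omega
      rcases Finset.mem_union.mp hr' with hh | hh
      · exact hh
      · have := hb2 _ hh; omega
    · intro hr
      have := hb1 _ hr
      exact ⟨Finset.mem_insert_of_mem (Finset.mem_union_left _ hr), by omega⟩
  have hS1eq : S1x = S1y := by
    rw [← hS1 S1x S2x hbx1 hbx2, ← hS1 S1y S2y hby1 hby2, h]
  -- S2's are equal
  have hS2 : ∀ (S1 S2 : Finset (ℕ×ℕ)),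
      (∀ r ∈ S1, 1 ≤ r.1 ∧ r.1 < r.2 ∧ r.2 ≤ ax - 1) →
      (∀ r ∈ S2.image (shf ax), ax + 1 ≤ r.1 ∧ r.1 < r.2 ∧ r.2 ≤ m - 1) →
      (insert (ax, m) (S1 ∪ S2.image (shf ax))).filter (fun r => ax < r.1) = S2.image (shf ax) := by
    intro S1 S2 hb1 hb2
    ext r
    rw [Finset.mem_filter]
    constructor
    · rintro ⟨hr, hr2⟩
      rcases Finset.mem_insert.mp hr with rfl | hr'
      · dsimp only at hr2; omega
      rcases Finset.mem_union.mp hr' with hh | hh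
      · have := hb1 _ hh; omega
      · exact hh
    · intro hr
      have := hb2 _ hr
      exact ⟨Finset.mem_insert_of_mem (Finset.mem_union_right _ hr), by omega⟩
  have hS2eq : S2x = S2y := by
    apply Finset.image_injective (shf_inj ax)
    rw [← hS2 S1x S2x hbx1 hbx2, ← hS2 S1y S2y hby1 hby2, h]
  rw [hS1eq, hS2eq]

lemma glueA_image {m : ℕ} (hm : 1 ≤ m) :
    (sigmaN m).image (glueA m) = (NSet m).filter (fun S => ¬ ∀ r ∈ S, r.2 ≠ m) := by
  apply Finset.Subset.antisymm
  · intro S hS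
    obtain ⟨x, hx, rfl⟩ := Finset.mem_image.mp hS
    exact glueA_mem hm hx
  · intro S hS
    rw [Finset.mem_filter] at hS
    obtain ⟨hSN, htop⟩ := hS
    push_neg at htop
    obtain ⟨p₀, hp₀, hp₀2⟩ := htop
    obtain ⟨hsub, hnc⟩ := mem_NSet.mp hSN
    set a := p₀.1 with hadef
    have hp0arc := mem_Arcs.mp (hsub hp₀)
    have hp0 : (a, m) ∈ S := by
      have : (a, m) = p₀ := by rw [hadef, ← hp₀2]
      rw [this]; exact hp₀
    have hbnd : ∀ r ∈ S, 1 ≤ r.1 ∧ r.1 < r.2 ∧ r.2 ≤ m := fun r hr => mem_Arcs.mp (hsub hr)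
    have hsplit : ∀ r ∈ S, r ≠ (a, m) → (r.2 < a ∨ (a < r.1 ∧ r.2 < m)) := by
      intro r hr hne
      have hNC := hnc r hr (a, m) hp0 hne
      unfold Noncrossing at hNC
      have := hbnd r hr
      dsimp only at hNC
      omega
    refine Finset.mem_image.mpr ⟨⟨a, S.filter (fun r => r.2 < a),
      (S.filter (fun r => a < r.1)).image (fun r => (r.1 - a, r.2 - a))⟩, ?_, ?_⟩
    · simp only [sigmaN, Finset.mem_sigma, Finset.mem_product]
      refine ⟨Finset.mem_Icc.mpr ⟨by omega, by omega⟩, ?_, ?_⟩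
      · rw [mem_NSet]
        constructor
        · intro r hr
          rw [Finset.mem_filter] at hr
          have := hbnd r hr.1
          exact mem_Arcs.mpr ⟨by omega, by omega, by omega⟩
        · intro p hp q hq hne
          rw [Finset.mem_filter] at hp hq
          exact hnc p hp.1 q hq.1 hne
      · rw [mem_NSet]
        constructor
        · intro r hr
          simp only [Finset.mem_image, Finset.mem_filter] at hr
          obtain ⟨s, ⟨hs, hs2⟩, rfl⟩ := hr
          have hbs := hbnd s hs
          have hne : s ≠ (a, m) := by
            intro hh
            rw [hh] at hs2
            dsimp only at hs2
            omega
          have := hsplit s hs hne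
          exact mem_Arcs.mpr ⟨by omega, by omega, by omega⟩
        · intro p hp q hq hne
          simp only [Finset.mem_image, Finset.mem_filter] at hp hq
          obtain ⟨r, ⟨hr, hr2⟩, rfl⟩ := hp
          obtain ⟨s, ⟨hs, hs2⟩, rfl⟩ := hq
          have hbr := hbnd r hr
          have hbs := hbnd s hs
          have hrs : r ≠ s := by
            intro hh
            rw [hh] at hne
            exact hne rfl
          have hNC := hnc r hr s hs hrs
          have hra : a < r.1 := hr2
          have hsa : a < s.1 := hs2
          have e1 : shf a (r.1 - a, r.2 - a) = r := by
            unfold shf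
            dsimp only
            exact Prod.ext (by omega) (by omega)
          have e2 : shf a (s.1 - a, s.2 - a) = s := by
            unfold shf
            dsimp only
            exact Prod.ext (by omega) (by omega)
          exact NC_shift.mp (by rw [e1, e2]; exact hNC)
    · -- glueA equals S
      unfold glueA
      dsimp only
      have himg : ((S.filter (fun r => a < r.1)).image (fun r => (r.1 - a, r.2 - a))).image (shf a)
          = S.filter (fun r => a < r.1) := by
        rw [Finset.image_image]
        have hcg : ∀ r ∈ S.filter (fun r => a < r.1), (shf a ∘ fun r => (r.1 - a, r.2 - a)) r = r := by
          intro r hr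
          rw [Finset.mem_filter] at hr
          have := hbnd r hr.1
          have hra := hr.2
          unfold shf Function.comp
          dsimp only
          exact Prod.ext (by omega) (by omega)
        rw [Finset.image_congr hcg]
        exact Finset.image_id
      rw [himg]
      ext r
      constructor
      · intro hr
        rcases Finset.mem_insert.mp hr with rfl | hr'
        · exact hp0
        rcases Finset.mem_union.mp hr' with hh | hh <;> exact (Finset.mem_filter.mp hh).1
      · intro hr
        by_cases he : r = (a, m)
        · rw [he]; exact Finset.mem_insert_self _ _
        rcases hsplit r hr he with hc | hc
        · exact Finset.mem_insert_of_mem (Finset.mem_union_left _ (Finset.mem_filter.mpr ⟨hr, hc⟩))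
        · exact Finset.mem_insert_of_mem (Finset.mem_union_right _ (Finset.mem_filter.mpr ⟨hr, hc.1⟩))
/-! ### the arc polynomial and its recurrence -/

lemma arc_sum {M : Type} [AddCommMonoid M] {m : ℕ} (hm : 1 ≤ m) (F : Finset (ℕ×ℕ) → M) :
    ∑ S ∈ NSet m, F S = (∑ S ∈ NSet (m-1), F S) + ∑ x ∈ sigmaN m, F (glueA m x) := by
  rw [← Finset.sum_filter_add_sum_filter_not (NSet m) (fun S => ∀ r ∈ S, r.2 ≠ m)]
  congr 1
  · rw [NSet_filter_noTop hm]
  · rw [← Finset.sum_image (glueA_inj hm), glueA_image hm]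

noncomputable def Qp (m : ℕ) : Polynomial ℤ := ∑ S ∈ NSet m, X ^ S.card

lemma Arcs_zero : Arcs 0 = ∅ := by
  ext p
  rw [mem_Arcs]
  simp only [Finset.notMem_empty, iff_false]
  omega

lemma NSet_zero : NSet 0 = {∅} := by
  ext S
  rw [mem_NSet, Finset.mem_singleton, Arcs_zero]
  constructor
  · rintro ⟨hsub, -⟩
    exact Finset.subset_empty.mp hsub
  · rintro rfl
    exact ⟨Finset.Subset.refl _, fun p hp => absurd hp (Finset.notMem_empty p)⟩

lemma Qp_zero : Qp 0 = 1 := by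
  unfold Qp
  rw [NSet_zero, Finset.sum_singleton, Finset.card_empty, pow_zero]

lemma Qp_rec {m : ℕ} (hm : 1 ≤ m) :
    Qp m = Qp (m-1) + ∑ a ∈ Finset.Icc 1 (m-1), Qp (a-1) * Qp (m-1-a) * X := by
  unfold Qp
  rw [arc_sum hm]
  congr 1
  unfold sigmaN
  rw [Finset.sum_sigma]
  apply Finset.sum_congr rfl
  intro a ha
  rw [Finset.sum_mul_sum, Finset.sum_mul, Finset.sum_product]
  apply Finset.sum_congr rfl
  intro S₁ h1
  rw [Finset.sum_mul]
  apply Finset.sum_congr rfl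
  intro S₂ h2
  have hmem : (⟨a, (S₁, S₂)⟩ : (_ : ℕ) × (Finset (ℕ×ℕ) × Finset (ℕ×ℕ))) ∈ sigmaN m := by
    simp only [sigmaN, Finset.mem_sigma, Finset.mem_product]
    exact ⟨ha, h1, h2⟩
  rw [glueA_card hmem]
  dsimp only
  rw [pow_add, pow_add, pow_one]

lemma Pp_eq_Qp : ∀ n : ℕ, 1 ≤ n → Pp n = Qp (n-1) := by
  intro n
  induction n using Nat.strong_induction_on with
  | _ n ih =>
    intro hn
    rcases Nat.eq_or_lt_of_le hn with h1 | h2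
    · rw [← h1, Pp_one, Qp_zero]
    · have hn2 : 2 ≤ n := h2
      rw [Pp_rec hn2, ih (n-1) (by omega) (by omega)]
      have hre : ∑ m ∈ Finset.Icc 2 (n-1), Pp (m-1) * Pp (n-m) * X
          = ∑ a ∈ Finset.Icc 1 (n-2), Qp (a-1) * Qp (n-2-a) * X := by
        have hidx : Finset.Icc 2 (n-1) = (Finset.Icc 1 (n-2)).image (·+1) := by
          ext x
          simp only [Finset.mem_Icc, Finset.mem_image]
          constructor
          · intro hx; exact ⟨x - 1, by omega, by omega⟩
          · rintro ⟨y, hy, rfl⟩; omega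
        rw [hidx, Finset.sum_image (fun x _ y _ h => by omega)]
        apply Finset.sum_congr rfl
        intro a ha
        simp only [Finset.mem_Icc] at ha
        have e1 : a + 1 - 1 = a := by omega
        have e2 : n - (a+1) = n - 1 - a := by omega
        rw [e1, e2, ih a (by omega) (by omega), ih (n-1-a) (by omega) (by omega)]
        have e3 : n - 1 - a - 1 = n - 2 - a := by omega
        rw [e3]
      rw [hre]
      have hq := Qp_rec (m := n-1) (by omega)
      have e4 : n - 1 - 1 = n - 2 := by omega
      rw [e4] at hq
      rw [e4, ← hq]
/-! ### transfers and the final theorem -/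

lemma coeff_Pp (n i : ℕ) :
    (Pp n).coeff i = (((A n).filter (fun l => lPk l ∧ lDes l = i)).card : ℤ) := by
  rw [← Finset.sum_boole]
  unfold Pp
  rw [Polynomial.finset_sum_coeff]
  apply Finset.sum_congr rfl
  intro l _
  rw [apply_ite (fun p : Polynomial ℤ => p.coeff i), Polynomial.coeff_zero,
    Polynomial.coeff_X_pow]
  by_cases h1 : lPk l <;> by_cases h2 : lDes l = i
  · simp [h1, h2]
  · have h2' : ¬ i = lDes l := fun hh => h2 hh.symm
    simp [h1, h2, h2']
  · simp [h1]
  · simp [h1]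

lemma coeff_Qp (m i : ℕ) :
    (Qp m).coeff i = (((NSet m).filter (fun S => S.card = i)).card : ℤ) := by
  rw [← Finset.sum_boole]
  unfold Qp
  rw [Polynomial.finset_sum_coeff]
  apply Finset.sum_congr rfl
  intro S _
  rw [Polynomial.coeff_X_pow]
  by_cases h2 : S.card = i
  · simp [h2]
  · have h2' : ¬ i = S.card := fun hh => h2 hh.symm
    simp [h2, h2']

/-- The `h`-polynomial of the associahedron (the Narayana polynomial) satisfies
`Σ_{w ∈ S_n(312)} t^{des w} = Σ_{w ∈ Pk_n(312)} t^{des w} (1+t)^{n-1-2 des w}`;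
consequently `γ_i = #{w ∈ Pk_n(312) : des w = i}`, and this is the number of faces
of cardinality `i` of the flag simplicial complex of sets of pairwise noncrossing
pairs `(a,b)` with `1 ≤ a < b ≤ n-1` (so the `γ`-vector of the associahedron
satisfies the Kruskal–Katona inequalities). -/
theorem associahedron_gamma (n : ℕ) (hn : 1 ≤ n) :
    ((∑ w ∈ Finset.univ.filter fun w : Equiv.Perm (Fin n) => Avoids312 n w,
        (X : Polynomial ℤ) ^ des n w) =
      ∑ w ∈ Finset.univ.filter
          fun w : Equiv.Perm (Fin n) => Avoids312 n w ∧ IsPk n w,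
        (X : Polynomial ℤ) ^ des n w * (1 + X) ^ (n - 1 - 2 * des n w)) ∧
    (∀ i : ℕ,
      (Finset.univ.filter
        fun w : Equiv.Perm (Fin n) => Avoids312 n w ∧ IsPk n w ∧ des n w = i).card =
      ((((Finset.Icc 1 (n - 1)) ×ˢ (Finset.Icc 1 (n - 1))).filter
          fun p => p.1 < p.2).powerset.filter
        fun S => S.card = i ∧ ∀ p ∈ S, ∀ q ∈ S, p ≠ q → Noncrossing p q).card) := by
  constructor
  · -- part 1
    have hL : (∑ w ∈ Finset.univ.filter fun w : Equiv.Perm (Fin n) => Avoids312 n w,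
        (X : Polynomial ℤ) ^ des n w) = Lp n := by
      calc ∑ w ∈ Finset.univ.filter fun w : Equiv.Perm (Fin n) => Avoids312 n w,
            (X : Polynomial ℤ) ^ des n w
          = ∑ w : Equiv.Perm (Fin n),
              (if Avoids312 n w then (X : Polynomial ℤ) ^ des n w else 0) :=
            Finset.sum_filter _ _
        _ = ∑ w : Equiv.Perm (Fin n),
              (if lAv (word n w) then (X : Polynomial ℤ) ^ lDes (word n w) else 0) :=
            Finset.sum_congr rfl (fun w _ => by
              rw [des_eq]
              exact if_congr (avoids_iff n w) rfl rfl)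
        _ = ∑ l ∈ Wfull n, (if lAv l then (X : Polynomial ℤ) ^ lDes l else 0) :=
            perm_sum n (fun l => if lAv l then (X : Polynomial ℤ) ^ lDes l else 0)
        _ = Lp n := by
            unfold Lp A
            rw [Finset.sum_filter]
    have hG : (∑ w ∈ Finset.univ.filter
          fun w : Equiv.Perm (Fin n) => Avoids312 n w ∧ IsPk n w,
        (X : Polynomial ℤ) ^ des n w * (1 + X) ^ (n - 1 - 2 * des n w)) = Gp n := by
      calc ∑ w ∈ Finset.univ.filter
            (fun w : Equiv.Perm (Fin n) => Avoids312 n w ∧ IsPk n w),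
            (X : Polynomial ℤ) ^ des n w * (1 + X) ^ (n - 1 - 2 * des n w)
          = ∑ w : Equiv.Perm (Fin n), (if Avoids312 n w ∧ IsPk n w then
              (X : Polynomial ℤ) ^ des n w * (1 + X) ^ (n - 1 - 2 * des n w) else 0) :=
            Finset.sum_filter _ _
        _ = ∑ w : Equiv.Perm (Fin n), (if lAv (word n w) then (if lPk (word n w) then
              (X : Polynomial ℤ) ^ lDes (word n w) *
                (1 + X) ^ (n - 1 - 2 * lDes (word n w)) else 0) else 0) :=
            Finset.sum_congr rfl (fun w _ => by
              rw [← ite_and, des_eq]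
              exact if_congr (and_congr (avoids_iff n w) (isPk_iff n w)) rfl rfl)
        _ = ∑ l ∈ Wfull n, (if lAv l then (if lPk l then
              (X : Polynomial ℤ) ^ lDes l * (1 + X) ^ (n - 1 - 2 * lDes l) else 0) else 0) :=
            perm_sum n (fun l => if lAv l then (if lPk l then
              (X : Polynomial ℤ) ^ lDes l * (1 + X) ^ (n - 1 - 2 * lDes l) else 0) else 0)
        _ = Gp n := by
            unfold Gp A
            rw [Finset.sum_filter]
    rw [hL, hG]
    exact L_eq_G n hn
  · -- part 2
    intro i
    have hLHS : (Finset.univ.filter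
        fun w : Equiv.Perm (Fin n) => Avoids312 n w ∧ IsPk n w ∧ des n w = i).card
        = ((A n).filter (fun l => lPk l ∧ lDes l = i)).card := by
      rw [Finset.card_filter, Finset.card_filter]
      calc ∑ w : Equiv.Perm (Fin n),
            (if Avoids312 n w ∧ IsPk n w ∧ des n w = i then (1:ℕ) else 0)
          = ∑ w : Equiv.Perm (Fin n),
              (if lAv (word n w) then
                (if lPk (word n w) ∧ lDes (word n w) = i then (1:ℕ) else 0) else 0) :=
            Finset.sum_congr rfl (fun w _ => by
              rw [← ite_and]
              exact if_congr (and_congr (avoids_iff n w)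
                (and_congr (isPk_iff n w) (by rw [des_eq]))) rfl rfl)
        _ = ∑ l ∈ Wfull n, (if lAv l then
              (if lPk l ∧ lDes l = i then (1:ℕ) else 0) else 0) :=
            perm_sum n (fun l => if lAv l then
              (if lPk l ∧ lDes l = i then (1:ℕ) else 0) else 0)
        _ = ∑ l ∈ A n, (if lPk l ∧ lDes l = i then (1:ℕ) else 0) := by
            unfold A
            rw [Finset.sum_filter]
    have heqset : ((((Finset.Icc 1 (n - 1)) ×ˢ (Finset.Icc 1 (n - 1))).filter
        fun p => p.1 < p.2).powerset.filter
        fun S => S.card = i ∧ ∀ p ∈ S, ∀ q ∈ S, p ≠ q → Noncrossing p q)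
        = (NSet (n-1)).filter (fun S => S.card = i) := by
      unfold NSet Arcs
      rw [Finset.filter_filter]
      ext S
      simp only [Finset.mem_filter]
      constructor
      · rintro ⟨hp, h1, h2⟩; exact ⟨hp, h2, h1⟩
      · rintro ⟨hp, h1, h2⟩; exact ⟨hp, h2, h1⟩
    have hcast : (((A n).filter (fun l => lPk l ∧ lDes l = i)).card : ℤ)
        = (((NSet (n-1)).filter (fun S => S.card = i)).card : ℤ) := by
      rw [← coeff_Pp, ← coeff_Qp, Pp_eq_Qp n hn]
    rw [hLHS, heqset]
    exact_mod_cast hcast
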